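/- Let X be a finite T₀-space and let f, g : X → X be continuous functions with f ≤ Id_X and g ≤ Id_X in the pointwise specialization order. Then (f ∘ g)^∞(X) = f^∞(X) ∩ g^∞(X), where for a continuous h ≤ Id_X, h^∞ denotes h^N for any N with h^N = h^{N+1} (such N exists). -/
import Mathlib


open unitInterval

set_option autoImplicit false

universe u v

/-- The specialization preorder: `x ≤ y` iff every open set containing `y` contains `x`. -/
def specLE {X : Type*} [TopologicalSpace X] (x y : X) : Prop :=
  ∀ U : Set X, IsOpen U → y ∈ U → x ∈ U

/-- A continuous map `i : A → X` is a (Hurewicz) cofibration iff it has the homotopy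
extension property with respect to all topological spaces. -/
def IsCofibration {A : Type*} {X : Type*} [TopologicalSpace A] [TopologicalSpace X]
    (i : C(A, X)) : Prop :=
  ∀ (Z : Type v) [TopologicalSpace Z] (f : C(X, Z)) (H : C(A × I, Z)),
    (∀ a, H (a, 0) = f (i a)) →
    ∃ G : C(X × I, Z),
      (∀ x, G (x, 0) = f x) ∧ ∀ a t, G (i a, t) = H (a, t)

/-- `x` is a down beat point of the subspace `S`:
the set of points of `S` strictly below `x` has a maximum. -/
def IsDownBeatPoint {X : Type*} [TopologicalSpace X] (S : Set X) (x : X) : Prop :=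
  x ∈ S ∧ ∃ m ∈ S, m ≠ x ∧ specLE m x ∧
    ∀ z ∈ S, z ≠ x → specLE z x → specLE z m

/-- `T` is a dbp–retract of `S`: `T` is obtained from `S` by successively
removing down beat points. -/
inductive IsDbpRetract {X : Type*} [TopologicalSpace X] : Set X → Set X → Prop
  | refl (S : Set X) : IsDbpRetract S S
  | step {S T : Set X} (x : X) (hx : IsDownBeatPoint S x)
      (h : IsDbpRetract (S \ {x}) T) : IsDbpRetract S T

/-- The minimal open set containing `x` (in a finite space): the intersection of all
open sets containing `x`. -/
def minOpen {X : Type*} [TopologicalSpace X] (x : X) : Set X :=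
  ⋂₀ {U : Set X | IsOpen U ∧ x ∈ U}

section Aux

variable {X : Type u} [TopologicalSpace X]

theorem specLE_refl (x : X) : specLE x x := fun _ _ h => h

theorem specLE_trans {x y z : X} (h1 : specLE x y) (h2 : specLE y z) : specLE x z :=
  fun U hU hz => h1 U hU (h2 U hU hz)

theorem specLE_antisymm [T0Space X] {x y : X} (h1 : specLE x y) (h2 : specLE y x) : x = y := by
  refine Inseparable.eq ?_
  rw [inseparable_iff_forall_isOpen]
  exact fun U hU => ⟨fun hx => h2 U hU hx, fun hy => h1 U hU hy⟩

theorem specLE_map (h : C(X, X)) {x y : X} (hxy : specLE x y) : specLE (h x) (h y) :=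
  fun U hU hy => hxy _ (hU.preimage h.continuous) hy

theorem specLE_iter {h : X → X} (hle : ∀ x, specLE (h x) x) :
    ∀ (k : ℕ) (y : X), specLE (h^[k] y) y := by
  intro k
  induction k with
  | zero => intro y; exact specLE_refl y
  | succ n ih =>
    intro y
    rw [Function.iterate_succ_apply]
    exact specLE_trans (ih (h y)) (hle y)

theorem exists_stab [Finite X] [T0Space X] (h : C(X, X)) (hle : ∀ x, specLE (h x) x) :
    ∃ N : ℕ, (⇑h)^[N + 1] = (⇑h)^[N] := by
  set n := Nat.card X with hn
  refine ⟨n, funext fun x => ?_⟩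
  -- first find i < n with h^[i+1] x = h^[i] x
  have key : ∃ i < n, (⇑h)^[i + 1] x = (⇑h)^[i] x := by
    by_contra hc
    push_neg at hc
    have main : ∀ i j : ℕ, i < j → j ≤ n → (⇑h)^[i] x = (⇑h)^[j] x → False := by
      intro i j hij hjn heq
      have h1 : specLE ((⇑h)^[j] x) ((⇑h)^[i + 1] x) := by
        have e : (⇑h)^[j] x = (⇑h)^[j - (i + 1)] ((⇑h)^[i + 1] x) := by
          rw [← Function.iterate_add_apply]
          congr 1
          omega
        rw [e]
        exact specLE_iter hle _ _
      have h2 : specLE ((⇑h)^[i + 1] x) ((⇑h)^[i] x) := by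
        rw [Function.iterate_succ_apply']
        exact hle _
      have h3 : specLE ((⇑h)^[i] x) ((⇑h)^[j] x) := by
        rw [heq]; exact specLE_refl _
      have heq2 : (⇑h)^[i + 1] x = (⇑h)^[i] x :=
        specLE_antisymm h2 (specLE_trans h3 h1)
      exact hc i (by omega) heq2
    have hinj : Function.Injective (fun i : Fin (n + 1) => (⇑h)^[(i : ℕ)] x) := by
      intro i j hij
      simp only at hij
      rcases lt_trichotomy (i : ℕ) (j : ℕ) with hlt | heqc | hgt
      · exact absurd hij (fun e => main _ _ hlt (by omega) e)
      · exact Fin.ext heqc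
      · exact absurd hij.symm (fun e => main _ _ hgt (by omega) e)
    have hcard := Nat.card_le_card_of_injective _ hinj
    simp only [Nat.card_eq_fintype_card, Fintype.card_fin] at hcard
    omega
  obtain ⟨i, hi, hfix⟩ := key
  have hfix' : ⇑h ((⇑h)^[i] x) = (⇑h)^[i] x :=
    (Function.iterate_succ_apply' (⇑h) i x).symm.trans hfix
  have : ∀ m : ℕ, (⇑h)^[i + m] x = (⇑h)^[i] x := by
    intro m
    rw [Nat.add_comm, Function.iterate_add_apply]
    exact Function.iterate_fixed hfix' m
  have e1 : (⇑h)^[n] x = (⇑h)^[i] x := by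
    have := this (n - i); rwa [Nat.add_sub_cancel' (Nat.le_of_lt hi)] at this
  have e2 : (⇑h)^[n + 1] x = (⇑h)^[i] x := by
    have := this (n + 1 - i); rwa [Nat.add_sub_cancel' (by omega : i ≤ n + 1)] at this
  rw [e1, e2]

theorem range_iter_eq_fix {h : X → X} {K : ℕ} (hK : h^[K + 1] = h^[K]) :
    Set.range (h^[K]) = {x | h x = x} := by
  ext y
  constructor
  · rintro ⟨x, rfl⟩
    exact (Function.iterate_succ_apply' h K x).symm.trans (congrFun hK x)
  · intro hy
    exact ⟨y, Function.iterate_fixed hy K⟩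

end Aux

/-- Let `X` be a finite T₀-space and `f, g : X → X` continuous with
`f ≤ Id_X` and `g ≤ Id_X`. The stabilized iterates exist, and
`(f ∘ g)^∞(X) = f^∞(X) ∩ g^∞(X)`. -/
theorem range_comp_infty_eq_inter
    {X : Type u} [TopologicalSpace X] [Finite X] [T0Space X]
    (f g : C(X, X)) (hf : ∀ x, specLE (f x) x) (hg : ∀ x, specLE (g x) x) :
    (∃ N : ℕ, (⇑f)^[N + 1] = (⇑f)^[N]) ∧
    (∃ M : ℕ, (⇑g)^[M + 1] = (⇑g)^[M]) ∧
    (∃ K : ℕ, (⇑f ∘ ⇑g)^[K + 1] = (⇑f ∘ ⇑g)^[K]) ∧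
    ∀ N M K : ℕ, (⇑f)^[N + 1] = (⇑f)^[N] → (⇑g)^[M + 1] = (⇑g)^[M] →
      (⇑f ∘ ⇑g)^[K + 1] = (⇑f ∘ ⇑g)^[K] →
      Set.range ((⇑f ∘ ⇑g)^[K]) = Set.range ((⇑f)^[N]) ∩ Set.range ((⇑g)^[M]) := by
  have hfg : ∀ x, specLE ((f : C(X, X)).comp g x) x :=
    fun x => specLE_trans (hf (g x)) (hg x)
  refine ⟨exists_stab f hf, exists_stab g hg, ?_, ?_⟩
  · obtain ⟨K, hK⟩ := exists_stab ((f : C(X, X)).comp g) hfg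
    exact ⟨K, hK⟩
  · intro N M K hN hM hK
    rw [range_iter_eq_fix hN, range_iter_eq_fix hM, range_iter_eq_fix hK]
    ext x
    simp only [Set.mem_inter_iff, Set.mem_setOf_eq, Function.comp_apply]
    constructor
    · intro hx
      have hgx : g x = x := by
        have h2 := hf (g x)
        rw [hx] at h2
        exact specLE_antisymm (hg x) h2
      have hfx : f x = x := by rw [hgx] at hx; exact hx
      exact ⟨hfx, hgx⟩
    · rintro ⟨hfx, hgx⟩
      rw [hgx, hfx]
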